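/- The Baumslag-Solitar group BS(1,m) is residually finite for every nonzero integer m. -/

import Mathlib

/-- The single relator `t a t⁻¹ a⁻ᵐ` defining the Baumslag–Solitar group
`BS(1,m) = ⟨a, t ; t a t⁻¹ = aᵐ⟩`; generator `false` is `a`, generator `true` is `t`. -/
def BSrels (m : ℤ) : Set (FreeGroup Bool) :=
  {FreeGroup.of true * FreeGroup.of false * (FreeGroup.of true)⁻¹ * (FreeGroup.of false ^ m)⁻¹}

/-- The Baumslag–Solitar group `BS(1,m)`. -/
def BS (m : ℤ) : Type := PresentedGroup (BSrels m)

instance (m : ℤ) : Group (BS m) := by unfold BS; infer_instance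

namespace BSproof

/-! ### Affine permutations of a commutative ring -/

/-- The affine permutation `x ↦ u * x + b`. -/
def aff {R : Type} [CommRing R] (u : Rˣ) (b : R) : Equiv.Perm R where
  toFun x := u * x + b
  invFun x := (u⁻¹ : Rˣ) * (x - b)
  left_inv x := by simp
  right_inv x := by simp

variable {R : Type} [CommRing R]

@[simp] lemma aff_apply (u : Rˣ) (b : R) (x : R) : aff u b x = u * x + b := rfl

lemma aff_mul (u v : Rˣ) (b c : R) :
    aff u b * aff v c = aff (u * v) (u * c + b) := by
  ext x
  simp only [aff, Equiv.Perm.mul_apply, Equiv.coe_fn_mk, Units.val_mul]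
  ring

@[simp] lemma aff_one : aff (1 : Rˣ) 0 = 1 := by
  ext x; simp [aff]

lemma aff_inv (u : Rˣ) (b : R) :
    (aff u b)⁻¹ = aff u⁻¹ (-((u⁻¹ : Rˣ) * b)) := by
  ext x
  simp only [aff, Equiv.Perm.inv_def, Equiv.coe_fn_mk, Equiv.coe_fn_symm_mk]
  ring

lemma aff_pow (u : Rˣ) (k : ℕ) : (aff u 0) ^ k = aff (u ^ k) 0 := by
  induction k with
  | zero => simp
  | succ k ih => rw [pow_succ, pow_succ, ih, aff_mul]; simp

/-- Translations as a homomorphism from `Multiplicative R`. -/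
def transHom : Multiplicative R →* Equiv.Perm R where
  toFun b := aff 1 b.toAdd
  map_one' := by simpa using aff_one
  map_mul' b c := by
    rw [aff_mul]
    simp [add_comm]

lemma aff_one_zpow (b : R) (j : ℤ) : (aff 1 b) ^ j = aff 1 (j • b) := by
  have h := map_zpow (transHom (R := R)) (Multiplicative.ofAdd b) j
  simpa [transHom] using h.symm

/-! ### The generators and relation of `BS(1,m)` -/

variable {m : ℤ}

/-- The generator `a` of `BS(1,m)`. -/
def A (m : ℤ) : PresentedGroup (BSrels m) := PresentedGroup.of false

/-- The generator `t` of `BS(1,m)`. -/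
def T (m : ℤ) : PresentedGroup (BSrels m) := PresentedGroup.of true

lemma rel : T m * A m * (T m)⁻¹ = A m ^ m := by
  have h : PresentedGroup.mk (BSrels m)
      (FreeGroup.of true * FreeGroup.of false * (FreeGroup.of true)⁻¹ *
        (FreeGroup.of false ^ m)⁻¹) = 1 :=
    (QuotientGroup.eq_one_iff _).mpr (Subgroup.subset_normalClosure rfl)
  rw [map_mul, map_mul, map_mul, map_inv, map_inv, map_zpow] at h
  exact mul_inv_eq_one.mp h

lemma rel_conj (j : ℤ) : T m * A m ^ j * (T m)⁻¹ = A m ^ (m * j) := by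
  rw [← conj_zpow, rel, ← zpow_mul]

lemma rel_conj_pow (k : ℕ) : ∀ j : ℤ,
    (T m) ^ k * A m ^ j * ((T m) ^ k)⁻¹ = A m ^ (m ^ k * j) := by
  induction k with
  | zero => intro j; simp
  | succ k ih =>
    intro j
    have : (T m) ^ (k + 1) * A m ^ j * ((T m) ^ (k + 1))⁻¹ =
        (T m) ^ k * (T m * A m ^ j * (T m)⁻¹) * ((T m) ^ k)⁻¹ := by
      rw [pow_succ]; group
    rw [this, rel_conj, ih (m * j)]
    congr 1
    ring

lemma T_pow_mul_A_zpow (k : ℕ) (j : ℤ) :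
    (T m) ^ k * A m ^ j = A m ^ (m ^ k * j) * (T m) ^ k := by
  rw [← rel_conj_pow k j]; group

lemma A_zpow_mul_T_inv (j : ℤ) :
    A m ^ j * (T m)⁻¹ = (T m)⁻¹ * A m ^ (m * j) := by
  rw [← rel_conj j]; group

/-! ### Normal form -/

/-- Every element of `BS(1,m)` has the form `t⁻ⁱ aʲ tᵏ`. -/
def NF (g : PresentedGroup (BSrels m)) : Prop :=
  ∃ (i k : ℕ) (j : ℤ), g = ((T m) ^ i)⁻¹ * A m ^ j * (T m) ^ k

lemma nf_one : NF (1 : PresentedGroup (BSrels m)) := ⟨0, 0, 0, by simp⟩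

lemma nf_mul_T {g : PresentedGroup (BSrels m)} (h : NF g) : NF (g * T m) := by
  obtain ⟨i, k, j, rfl⟩ := h
  exact ⟨i, k + 1, j, by rw [pow_succ]; group⟩

lemma nf_mul_T_inv {g : PresentedGroup (BSrels m)} (h : NF g) : NF (g * (T m)⁻¹) := by
  obtain ⟨i, k, j, rfl⟩ := h
  cases k with
  | zero =>
    refine ⟨i + 1, 0, m * j, ?_⟩
    rw [pow_zero, mul_one, mul_assoc, A_zpow_mul_T_inv, pow_succ, mul_inv_rev]
    group
  | succ k =>
    refine ⟨i, k, j, ?_⟩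
    rw [pow_succ]
    group

lemma nf_mul_A {g : PresentedGroup (BSrels m)} (h : NF g) : NF (g * A m) := by
  obtain ⟨i, k, j, rfl⟩ := h
  refine ⟨i, k, j + m ^ k, ?_⟩
  have : (T m) ^ k * A m = A m ^ (m ^ k * 1) * (T m) ^ k := by
    simpa using T_pow_mul_A_zpow (m := m) k 1
  rw [mul_assoc, mul_assoc, this, ← mul_assoc, ← mul_assoc, mul_assoc (((T m) ^ i)⁻¹),
    ← zpow_add]
  ring_nf

lemma nf_mul_A_inv {g : PresentedGroup (BSrels m)} (h : NF g) : NF (g * (A m)⁻¹) := by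
  obtain ⟨i, k, j, rfl⟩ := h
  refine ⟨i, k, j - m ^ k, ?_⟩
  have : (T m) ^ k * (A m)⁻¹ = A m ^ (m ^ k * (-1)) * (T m) ^ k := by
    simpa using T_pow_mul_A_zpow (m := m) k (-1)
  rw [mul_assoc, mul_assoc, this, ← mul_assoc, ← mul_assoc, mul_assoc (((T m) ^ i)⁻¹),
    ← zpow_add]
  ring_nf

lemma nf_all (g : PresentedGroup (BSrels m)) : NF g := by
  obtain ⟨w, rfl⟩ := PresentedGroup.mk_surjective (BSrels m) g
  suffices h : ∀ (w : FreeGroup Bool) (g : PresentedGroup (BSrels m)),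
      NF g → NF (g * PresentedGroup.mk (BSrels m) w) by
    simpa using h w 1 nf_one
  intro w
  induction w with
  | C1 => simpa using fun g h => h
  | of b =>
    intro g hg
    cases b
    · exact nf_mul_A hg
    · exact nf_mul_T hg
  | inv_of b _ =>
    intro g hg
    cases b
    · rw [map_inv]; exact nf_mul_A_inv hg
    · rw [map_inv]; exact nf_mul_T_inv hg
  | mul x y hx hy =>
    intro g hg
    rw [map_mul, ← mul_assoc]
    exact hy _ (hx _ hg)

/-! ### Finite quotients -/

/-- The exponent-sum-of-`t` homomorphism to `ZMod n`. -/
def φ₁ (m : ℤ) (n : ℕ) : PresentedGroup (BSrels m) →* Multiplicative (ZMod n) :=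
  PresentedGroup.toGroup (f := fun b => if b then Multiplicative.ofAdd 1 else 1)
    (by
      intro r hr
      rw [BSrels, Set.mem_singleton_iff] at hr
      subst hr
      simp [map_zpow])

@[simp] lemma φ₁_T (n : ℕ) : φ₁ m n (T m) = Multiplicative.ofAdd 1 :=
  PresentedGroup.toGroup.of _

@[simp] lemma φ₁_A (n : ℕ) : φ₁ m n (A m) = 1 :=
  PresentedGroup.toGroup.of _

/-- The affine homomorphism to `Perm R`, sending `t` to `x ↦ u x` (with `u = m`)
and `a` to `x ↦ x + 1`. -/
def φ₂ (m : ℤ) {R : Type} [CommRing R] (u : Rˣ) (hu : (u : R) = (m : R)) :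
    PresentedGroup (BSrels m) →* Equiv.Perm R :=
  PresentedGroup.toGroup (f := fun b => if b then aff u 0 else aff 1 1)
    (by
      intro r hr
      rw [BSrels, Set.mem_singleton_iff] at hr
      subst hr
      simp only [map_mul, map_inv, map_zpow, FreeGroup.lift_apply_of, if_true, if_false,
        Bool.false_eq_true]
      rw [aff_one_zpow, aff_mul, aff_inv, aff_inv, aff_mul, aff_mul]
      ext x
      simp only [aff_apply, Equiv.Perm.one_apply, Units.val_mul, Units.val_one, one_mul,
        mul_one, mul_zero, add_zero, zero_add, neg_zero, inv_one, zsmul_eq_mul]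
      push_cast
      rw [← hu]
      linear_combination (x - (u : R)) * u.mul_inv)

@[simp] lemma φ₂_T {R : Type} [CommRing R] (u : Rˣ) (hu : (u : R) = (m : R)) :
    φ₂ m u hu (T m) = aff u 0 :=
  PresentedGroup.toGroup.of _

@[simp] lemma φ₂_A {R : Type} [CommRing R] (u : Rˣ) (hu : (u : R) = (m : R)) :
    φ₂ m u hu (A m) = aff 1 1 :=
  PresentedGroup.toGroup.of _

theorem key (m : ℤ) (hm : m ≠ 0) (g : PresentedGroup (BSrels m)) (hg : g ≠ 1) :
    ∃ (Q : Type) (_ : Group Q) (_ : Finite Q)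
      (φ : PresentedGroup (BSrels m) →* Q), φ g ≠ 1 := by
  obtain ⟨i, k, j, rfl⟩ := nf_all g
  by_cases hik : i = k
  · -- then j ≠ 0 : detect with the affine homomorphism mod p
    subst hik
    have hj : j ≠ 0 := by
      rintro rfl
      exact hg (by group)
    obtain ⟨p, hple, hp⟩ := Nat.exists_infinite_primes ((m * j).natAbs + 1)
    haveI : Fact p.Prime := ⟨hp⟩
    have hlt : |m * j| < (p : ℤ) := by
      rw [Int.abs_eq_natAbs]
      exact_mod_cast hple
    have hjabs : (1:ℤ) ≤ |j| := Int.one_le_abs hj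
    have hmabs : (1:ℤ) ≤ |m| := Int.one_le_abs hm
    have hmuljabs : |m * j| = |m| * |j| := abs_mul m j
    have hmc : ((m : ZMod p)) ≠ 0 := by
      intro h
      rw [ZMod.intCast_zmod_eq_zero_iff_dvd] at h
      have h2 : (p : ℤ) ∣ |m| := (dvd_abs _ _).mpr h
      have := Int.le_of_dvd (by omega) h2
      nlinarith
    have hjc : ((j : ZMod p)) ≠ 0 := by
      intro h
      rw [ZMod.intCast_zmod_eq_zero_iff_dvd] at h
      have h2 : (p : ℤ) ∣ |j| := (dvd_abs _ _).mpr h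
      have := Int.le_of_dvd (by omega) h2
      nlinarith
    have hunit : IsUnit ((m : ZMod p)) := isUnit_iff_ne_zero.mpr hmc
    set u : (ZMod p)ˣ := hunit.unit with hu
    refine ⟨Equiv.Perm (ZMod p), inferInstance, inferInstance,
      φ₂ m u hunit.unit_spec, ?_⟩
    intro hone
    have hφ : φ₂ m u hunit.unit_spec (((T m) ^ i)⁻¹ * A m ^ j * (T m) ^ i) 0 =
        ((u ^ i)⁻¹ : (ZMod p)ˣ) * (j : ZMod p) := by
      simp only [map_mul, map_inv, map_pow, map_zpow, φ₂_T, φ₂_A, aff_pow, aff_inv,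
        aff_one_zpow, Equiv.Perm.mul_apply]
      simp only [aff_apply, mul_zero, add_zero, zero_add, neg_zero, one_mul,
        Units.val_one]
      simp [zsmul_eq_mul]
    rw [hone] at hφ
    simp only [Equiv.Perm.one_apply] at hφ
    exact hjc ((Units.mul_right_eq_zero _).mp hφ.symm)
  · -- i ≠ k : detect with the t-exponent homomorphism
    set d : ℤ := (k : ℤ) - (i : ℤ) with hd
    have hdne : d ≠ 0 := by
      have h1 : (k:ℤ) ≠ (i:ℤ) := by exact_mod_cast Ne.symm hik
      simpa [hd, sub_ne_zero] using h1
    set n : ℕ := d.natAbs + 1 with hn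
    refine ⟨Multiplicative (ZMod n), inferInstance, inferInstance, φ₁ m n, ?_⟩
    intro hone
    have hφ : φ₁ m n (((T m) ^ i)⁻¹ * A m ^ j * (T m) ^ k) =
        Multiplicative.ofAdd ((d : ZMod n)) := by
      simp only [map_mul, map_inv, map_pow, map_zpow, φ₁_T, φ₁_A, one_zpow, mul_one]
      rw [← ofAdd_nsmul, ← ofAdd_nsmul, ← ofAdd_neg, ← ofAdd_add]
      congr 1
      rw [hd]
      push_cast
      simp [nsmul_eq_mul]
      ring
    rw [hone] at hφ
    have h0 : ((d : ZMod n)) = 0 := ofAdd_eq_one.mp hφ.symm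
    rw [ZMod.intCast_zmod_eq_zero_iff_dvd] at h0
    have hle := Int.le_of_dvd (abs_pos.mpr hdne) ((dvd_abs _ _).mpr h0)
    have hni : (n : ℤ) = |d| + 1 := by
      rw [hn, Int.abs_eq_natAbs]
      push_cast
      ring
    omega

end BSproof

/-- `BS(1,m)` is residually finite for every nonzero integer `m`: every nontrivial
element is detected by a homomorphism to a finite group. -/
theorem BS_one_m_residually_finite (m : ℤ) (hm : m ≠ 0) (g : BS m) (hg : g ≠ 1) :
    ∃ (Q : Type) (_ : Group Q) (_ : Finite Q) (φ : BS m →* Q), φ g ≠ 1 := by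
  exact BSproof.key m hm g hg
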